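/- Let A be symmetric with orthonormal eigenpairs (λ_j, φ_j), λ_1 ≤ … ≤ λ_ℓ < λ_{ℓ+1} ≤ … ≤ λ_n, and let G, ρ be as in the optimal Richardson step. If x = Σ α_j φ_j with P x ≠ 0 (P the projection onto the first ℓ eigenvectors), then the angle between G^k x and the invariant subspace span(φ_1,…,φ_ℓ) satisfies tan∠(G^k x, span(φ_1,…,φ_ℓ)) ≤ ρ^k tan∠(x, span(φ_1,…,φ_ℓ)), where tan∠(y, S) := ‖(I−P_S)y‖/‖P_S y‖. -/

import Mathlib

open Matrix Finset
set_option maxHeartbeats 1000000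

/-- The Euclidean norm on `Fin m → ℝ`. -/
noncomputable def euclNorm {m : ℕ} (x : Fin m → ℝ) : ℝ := Real.sqrt (∑ i, x i ^ 2)

/-- Dot product of two combinations of an orthonormal family. -/
lemma dot_sum_sum {m : ℕ} (φ : Fin m → (Fin m → ℝ))
    (hortho : ∀ i j, φ i ⬝ᵥ φ j = if i = j then (1 : ℝ) else 0)
    (s t : Finset (Fin m)) (c d : Fin m → ℝ) :
    (∑ i ∈ s, c i • φ i) ⬝ᵥ (∑ j ∈ t, d j • φ j) = ∑ i ∈ s ∩ t, c i * d i := by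
  have expand : (∑ i ∈ s, c i • φ i) ⬝ᵥ (∑ j ∈ t, d j • φ j)
      = ∑ i ∈ s, ∑ j ∈ t, (c i * d j) * (φ i ⬝ᵥ φ j) := by
    simp only [dotProduct, Finset.sum_apply, Pi.smul_apply, smul_eq_mul,
      Finset.sum_mul, Finset.mul_sum]
    rw [Finset.sum_comm (s := Finset.univ) (t := t)]
    simp only [Finset.sum_comm (s := Finset.univ) (t := s)]
    rw [Finset.sum_comm (s := t) (t := s)]
    exact Finset.sum_congr rfl fun i _ => Finset.sum_congr rfl fun j _ =>
      Finset.sum_congr rfl fun a _ => by ring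
  rw [expand]
  have h1 : ∀ i ∈ s, (∑ j ∈ t, (c i * d j) * (φ i ⬝ᵥ φ j))
      = if i ∈ t then c i * d i else 0 := by
    intro i _
    have : ∀ j ∈ t, (c i * d j) * (φ i ⬝ᵥ φ j) = if i = j then c i * d i else 0 := by
      intro j _
      rw [hortho]
      by_cases h : i = j
      · subst h; simp
      · simp [h]
    rw [Finset.sum_congr rfl this, Finset.sum_ite_eq]
  rw [Finset.sum_congr rfl h1, Finset.sum_ite_mem, Finset.inter_comm]

theorem tangent_angle_geometric_decay
    (n : ℕ) (A : Matrix (Fin (n + 1)) (Fin (n + 1)) ℝ) (hA : A.IsSymm)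
    (φ : Fin (n + 1) → (Fin (n + 1) → ℝ)) (lam : Fin (n + 1) → ℝ)
    (hortho : ∀ i j, φ i ⬝ᵥ φ j = if i = j then (1 : ℝ) else 0)
    (heig : ∀ j, A.mulVec (φ j) = lam j • φ j)
    (hmono : Monotone lam)
    (ℓ : Fin (n + 1)) (hℓ : (ℓ : ℕ) + 1 ≤ n)
    (hgap : lam ℓ < lam ⟨(ℓ : ℕ) + 1, by omega⟩)
    (θ τ : ℝ) (hθ : 0 < θ)
    (hτ : τ = (lam ⟨(ℓ : ℕ) + 1, by omega⟩ + lam (Fin.last n)) / 2 - 1 / θ - 1)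
    (G : Matrix (Fin (n + 1)) (Fin (n + 1)) ℝ)
    (hG : G = (1 + θ * (1 + τ)) • (1 : Matrix (Fin (n + 1)) (Fin (n + 1)) ℝ) - θ • A)
    (ρ : ℝ)
    (hρ : ρ = (lam (Fin.last n) - lam ⟨(ℓ : ℕ) + 1, by omega⟩) /
        (lam (Fin.last n) + lam ⟨(ℓ : ℕ) + 1, by omega⟩ - 2 * lam ℓ))
    (P Q : (Fin (n + 1) → ℝ) → (Fin (n + 1) → ℝ))
    (hP : ∀ y, P y = ∑ i ∈ Finset.univ.filter (fun i => i ≤ ℓ), (y ⬝ᵥ φ i) • φ i)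
    (hQ : ∀ y, Q y = y - P y)
    (x : Fin (n + 1) → ℝ) (hPx : P x ≠ 0) (k : ℕ) :
    euclNorm (Q ((G ^ k).mulVec x)) / euclNorm (P ((G ^ k).mulVec x))
      ≤ ρ ^ k * (euclNorm (Q x) / euclNorm (P x)) := by
  classical
  set ℓ1 : Fin (n + 1) := ⟨(ℓ : ℕ) + 1, by omega⟩ with hℓ1
  set μ : ℝ := (lam ℓ1 + lam (Fin.last n)) / 2 with hμ
  set g : Fin (n + 1) → ℝ := fun j => θ * (μ - lam j) with hgdef
  -- basic spectral facts
  have hℓle : ℓ1 ≤ Fin.last n := Fin.le_last _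
  have hlamle : lam ℓ1 ≤ lam (Fin.last n) := hmono hℓle
  -- G acts diagonally
  have hcoef : 1 + θ * (1 + τ) = θ * μ := by
    rw [hτ, hμ]; field_simp; ring
  have hGφ : ∀ j, G.mulVec (φ j) = g j • φ j := by
    intro j
    rw [hG, Matrix.sub_mulVec, Matrix.smul_mulVec, Matrix.one_mulVec,
      Matrix.smul_mulVec, heig, hcoef]
    rw [smul_smul, ← sub_smul]
    congr 1
    simp only [hgdef]; ring
  have hGkφ : ∀ j, (G ^ k).mulVec (φ j) = (g j) ^ k • φ j := by
    intro j
    induction k with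
    | zero => simp
    | succ m ih =>
      rw [pow_succ, ← Matrix.mulVec_mulVec, hGφ, Matrix.mulVec_smul, ih,
        smul_smul, pow_succ]
      ring_nf
  -- symmetry of G^k
  have hGsymm : Gᵀ = G := by
    rw [hG, Matrix.transpose_sub, Matrix.transpose_smul, Matrix.transpose_smul,
      Matrix.transpose_one, hA.eq]
  have hGksymm : (G ^ k)ᵀ = G ^ k := by
    rw [Matrix.transpose_pow, hGsymm]
  -- coefficients
  set β : Fin (n + 1) → ℝ := fun j => x ⬝ᵥ φ j with hβ
  set y : Fin (n + 1) → ℝ := (G ^ k).mulVec x with hy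
  have hyφ : ∀ j, y ⬝ᵥ φ j = (g j) ^ k * β j := by
    intro j
    rw [dotProduct_comm, hy, Matrix.dotProduct_mulVec, ← hGksymm,
      Matrix.vecMul_transpose, hGkφ, smul_dotProduct, dotProduct_comm]
    rfl
  -- Parseval: φ is an orthonormal basis
  set M : Matrix (Fin (n + 1)) (Fin (n + 1)) ℝ := Matrix.of φ with hM
  have hMMT : M * Mᵀ = 1 := by
    ext i j
    simpa [hM, Matrix.mul_apply, Matrix.one_apply, dotProduct] using hortho i j
  have hMTM : Mᵀ * M = 1 := mul_eq_one_comm.mp hMMT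
  have hdelta : ∀ b a : Fin (n + 1), (∑ j, φ j b * φ j a) = if b = a then (1 : ℝ) else 0 := by
    intro b a
    have := congrFun (congrFun hMTM b) a
    simpa [hM, Matrix.mul_apply, Matrix.one_apply] using this
  have hParseval : ∀ v : Fin (n + 1) → ℝ, (∑ j, (v ⬝ᵥ φ j) • φ j) = v := by
    intro v
    funext a
    have : (∑ j, (v ⬝ᵥ φ j) • φ j) a = ∑ j, ∑ b, v b * φ j b * φ j a := by
      simp [dotProduct, Finset.sum_apply, Finset.sum_mul]
    rw [this, Finset.sum_comm]
    have : ∀ b : Fin (n + 1), (∑ j, v b * φ j b * φ j a) = v b * (if b = a then (1:ℝ) else 0) := by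
      intro b
      rw [← hdelta b a, Finset.mul_sum]
      congr 1; funext j; ring
    rw [Finset.sum_congr rfl fun b _ => this b]
    simp
  -- the index sets
  set s : Finset (Fin (n + 1)) := Finset.univ.filter (fun i => i ≤ ℓ) with hs
  -- squared norms
  have hPdot : ∀ v : Fin (n + 1) → ℝ, P v ⬝ᵥ P v = ∑ i ∈ s, (v ⬝ᵥ φ i) ^ 2 := by
    intro v
    rw [hP, dot_sum_sum φ hortho]
    simp [sq]
  have hQdot : ∀ v : Fin (n + 1) → ℝ, Q v ⬝ᵥ Q v = ∑ i ∈ sᶜ, (v ⬝ᵥ φ i) ^ 2 := by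
    intro v
    have hvP : v ⬝ᵥ P v = ∑ i ∈ s, (v ⬝ᵥ φ i) ^ 2 := by
      nth_rewrite 1 [← hParseval v]
      rw [hP, dot_sum_sum φ hortho]
      simp [sq]
    have hvv : v ⬝ᵥ v = ∑ i, (v ⬝ᵥ φ i) ^ 2 := by
      conv_lhs => rw [← hParseval v]
      rw [dot_sum_sum φ hortho]
      simp [sq]
    rw [hQ, sub_dotProduct, dotProduct_sub, dotProduct_sub,
      hPdot, hvv, hvP]
    have : P v ⬝ᵥ v = ∑ i ∈ s, (v ⬝ᵥ φ i) ^ 2 := by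
      rw [dotProduct_comm]; exact hvP
    rw [this]
    rw [← Finset.sum_compl_add_sum s (fun i => (v ⬝ᵥ φ i) ^ 2)]
    ring
  have heucl : ∀ v : Fin (n + 1) → ℝ, euclNorm v = Real.sqrt (v ⬝ᵥ v) := by
    intro v; simp [euclNorm, dotProduct, sq]
  -- scalar quantities
  set D : ℝ := ∑ i ∈ s, β i ^ 2 with hD
  set N : ℝ := ∑ i ∈ sᶜ, β i ^ 2 with hN
  set D' : ℝ := ∑ i ∈ s, ((g i) ^ k * β i) ^ 2 with hD'
  set N' : ℝ := ∑ i ∈ sᶜ, ((g i) ^ k * β i) ^ 2 with hN'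
  have hPyN : euclNorm (P y) = Real.sqrt D' := by
    rw [heucl, hPdot]
    congr 1
    exact Finset.sum_congr rfl fun i _ => by rw [hyφ]
  have hQyN : euclNorm (Q y) = Real.sqrt N' := by
    rw [heucl, hQdot]
    congr 1
    exact Finset.sum_congr rfl fun i _ => by rw [hyφ]
  have hPxN : euclNorm (P x) = Real.sqrt D := by rw [heucl, hPdot]
  have hQxN : euclNorm (Q x) = Real.sqrt N := by rw [heucl, hQdot]
  -- positivity of D
  have hDpos : 0 < D := by
    rcases lt_or_eq_of_le (Finset.sum_nonneg fun i _ => sq_nonneg (β i)) with h | h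
    · exact h
    · exfalso
      apply hPx
      have h0 : P x ⬝ᵥ P x = 0 := by rw [hPdot]; exact h.symm
      exact (dotProduct_self_eq_zero).mp h0
  -- eigenvalue bounds on g
  have hgℓpos : 0 < g ℓ := by
    have h1 : lam ℓ < μ := by rw [hμ]; linarith
    exact mul_pos hθ (by linarith)
  have hdenpos : 0 < lam (Fin.last n) + lam ℓ1 - 2 * lam ℓ := by linarith
  have hρ0 : 0 ≤ ρ := by
    rw [hρ]
    apply div_nonneg (by linarith)
    rw [hℓ1] at hdenpos ⊢
    linarith
  have hρc : ρ * g ℓ = θ * (lam (Fin.last n) - lam ℓ1) / 2 := by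
    rw [hρ, hgdef]
    simp only
    rw [hμ, hℓ1] at *
    field_simp
    ring
  -- bounds for the two index blocks
  have hjb : ∀ j : Fin (n + 1), j ∈ sᶜ → (g j) ^ 2 ≤ (ρ * g ℓ) ^ 2 := by
    intro j hj
    have hj' : ¬ j ≤ ℓ := by
      simp only [hs, Finset.mem_compl, Finset.mem_filter, Finset.mem_univ, true_and] at hj
      exact hj
    have hℓ1j : ℓ1 ≤ j := by
      have : ℓ < j := lt_of_not_ge hj'
      have h1 : (ℓ : ℕ) + 1 ≤ (j : ℕ) := this
      exact h1
    have h1 : lam ℓ1 ≤ lam j := hmono hℓ1j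
    have h2 : lam j ≤ lam (Fin.last n) := hmono (Fin.le_last j)
    rw [hρc]
    simp only [hgdef]
    have hb1 : θ * (μ - lam j) ≤ θ * (lam (Fin.last n) - lam ℓ1) / 2 := by
      have := mul_le_mul_of_nonneg_left
        (show μ - lam j ≤ (lam (Fin.last n) - lam ℓ1) / 2 by rw [hμ]; linarith) hθ.le
      linarith
    have hb2 : -(θ * (lam (Fin.last n) - lam ℓ1) / 2) ≤ θ * (μ - lam j) := by
      have := mul_le_mul_of_nonneg_left
        (show -((lam (Fin.last n) - lam ℓ1) / 2) ≤ μ - lam j by rw [hμ]; linarith) hθ.le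
      linarith
    exact sq_le_sq' hb2 hb1
  have hib : ∀ i : Fin (n + 1), i ∈ s → g ℓ ≤ g i := by
    intro i hi
    have hi' : i ≤ ℓ := by
      simp only [hs, Finset.mem_filter, Finset.mem_univ, true_and] at hi
      exact hi
    have h1 : lam i ≤ lam ℓ := hmono hi'
    exact mul_le_mul_of_nonneg_left (by linarith) hθ.le
  -- sum bounds
  have hN'le : N' ≤ ((ρ * g ℓ) ^ k) ^ 2 * N := by
    rw [hN', hN, Finset.mul_sum]
    apply Finset.sum_le_sum
    intro i hi
    have h1 : (g i) ^ 2 ≤ (ρ * g ℓ) ^ 2 := hjb i hi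
    have h2 : ((g i) ^ k) ^ 2 ≤ ((ρ * g ℓ) ^ k) ^ 2 := by
      rw [← pow_mul, ← pow_mul, mul_comm k 2, pow_mul, pow_mul]
      exact pow_le_pow_left₀ (sq_nonneg _) h1 k
    calc ((g i) ^ k * β i) ^ 2 = ((g i) ^ k) ^ 2 * β i ^ 2 := by ring
      _ ≤ ((ρ * g ℓ) ^ k) ^ 2 * β i ^ 2 :=
        mul_le_mul_of_nonneg_right h2 (sq_nonneg _)
  have hD'ge : ((g ℓ) ^ k) ^ 2 * D ≤ D' := by
    rw [hD', hD, Finset.mul_sum]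
    apply Finset.sum_le_sum
    intro i hi
    have h1 : (g ℓ) ^ 2 ≤ (g i) ^ 2 := by
      have := hib i hi
      nlinarith
    have h2 : ((g ℓ) ^ k) ^ 2 ≤ ((g i) ^ k) ^ 2 := by
      rw [← pow_mul, ← pow_mul, mul_comm k 2, pow_mul, pow_mul]
      exact pow_le_pow_left₀ (sq_nonneg _) h1 k
    calc ((g ℓ) ^ k) ^ 2 * β i ^ 2 ≤ ((g i) ^ k) ^ 2 * β i ^ 2 :=
        mul_le_mul_of_nonneg_right h2 (sq_nonneg _)
      _ = ((g i) ^ k * β i) ^ 2 := by ring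
  have hgkpos : 0 < (g ℓ) ^ k := pow_pos hgℓpos k
  have hD'pos : 0 < D' := lt_of_lt_of_le (by positivity) hD'ge
  -- take square roots
  have hsq1 : Real.sqrt N' ≤ (ρ * g ℓ) ^ k * Real.sqrt N := by
    have h := Real.sqrt_le_sqrt hN'le
    rwa [Real.sqrt_mul (sq_nonneg _), Real.sqrt_sq (by positivity)] at h
  have hsq2 : (g ℓ) ^ k * Real.sqrt D ≤ Real.sqrt D' := by
    have h := Real.sqrt_le_sqrt hD'ge
    rwa [Real.sqrt_mul (sq_nonneg _), Real.sqrt_sq (le_of_lt hgkpos)] at h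
  have hsqDpos : 0 < Real.sqrt D := Real.sqrt_pos.mpr hDpos
  -- conclude
  rw [hQyN, hPyN, hQxN, hPxN]
  calc Real.sqrt N' / Real.sqrt D'
      ≤ ((ρ * g ℓ) ^ k * Real.sqrt N) / ((g ℓ) ^ k * Real.sqrt D) := by
        apply div_le_div₀ (by positivity) hsq1 (by positivity) hsq2
    _ = ρ ^ k * (Real.sqrt N / Real.sqrt D) := by
        rw [mul_pow]
        field_simp
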